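/- Let A be a symmetric n×n matrix (not necessarily positive definite), H₀ an SPD n×n matrix, x₀ ∈ ℝⁿ, and m ≥ 1. Run PCG on the quadratic q from x₀ with preconditioner H₀, and run LBFGS(m) with exact line search from the same x₀ using H_k⁰ = H₀ at every iteration. Assume iterations k = 0,…,j of both methods are well defined and s_kᵀy_k ≠ 0 for k = 0,…,j. Then, as long as g_k ≠ 0, the search directions, step lengths, and steps s_k generated by LBFGS(m) are identical to those generated by PCG: d_k^m = d_k^{PCG} for all k ≤ j. Consequently, if j = n, quadratic termination occurs. -/

import Mathlib

open Matrix

/-- Ordered product `U a * U (a+1) * ⋯ * U (b-1)` of a sequence of square matrices. -/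
noncomputable def prodAsc {n : ℕ} (U : ℕ → Matrix (Fin n) (Fin n) ℝ) (a b : ℕ) :
    Matrix (Fin n) (Fin n) ℝ :=
  ((List.range (b - a)).map fun i => U (a + i)).prod

/-- The LBFGS(m) inverse-Hessian approximation at iteration `k`, built from the `m` most
recent pairs `(s i, y i)` (i.e., indices `k - m, …, k - 1`) with seed matrix `H0`. -/
noncomputable def lbfgsH {n : ℕ} (H0 : Matrix (Fin n) (Fin n) ℝ)
    (s y : ℕ → Fin n → ℝ) (m k : ℕ) : Matrix (Fin n) (Fin n) ℝ :=
  let ρ : ℕ → ℝ := fun i => 1 / (s i ⬝ᵥ y i)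
  let U : ℕ → Matrix (Fin n) (Fin n) ℝ := fun i => 1 - ρ i • vecMulVec (y i) (s i)
  (prodAsc U (k - m) k)ᵀ * H0 * prodAsc U (k - m) k +
    ∑ i ∈ Finset.Ico (k - m) k,
      ρ i • ((prodAsc U (i + 1) k)ᵀ * vecMulVec (s i) (s i) * prodAsc U (i + 1) k)


lemma vecMulVec_mulVec' {n : ℕ} (y s g : Fin n → ℝ) :
    vecMulVec y s *ᵥ g = (s ⬝ᵥ g) • y := by
  ext i
  simp [Matrix.mulVec, vecMulVec_apply, dotProduct, Finset.mul_sum, Finset.sum_mul,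
    mul_assoc, mul_comm, mul_left_comm]

lemma prodAsc_of_le {n : ℕ} (U : ℕ → Matrix (Fin n) (Fin n) ℝ) {a b : ℕ} (h : b ≤ a) :
    prodAsc U a b = 1 := by simp [prodAsc, Nat.sub_eq_zero_of_le h]

lemma prodAsc_succ_right {n : ℕ} (U : ℕ → Matrix (Fin n) (Fin n) ℝ) {a b : ℕ} (h : a ≤ b) :
    prodAsc U a (b + 1) = prodAsc U a b * U b := by
  obtain ⟨d, rfl⟩ := Nat.exists_eq_add_of_le h
  unfold prodAsc
  have h1 : a + d + 1 - a = d + 1 := by omega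
  have h2 : a + d - a = d := by omega
  rw [h1, h2, List.range_succ, List.map_append, List.prod_append]
  simp

lemma prodAsc_mulVec_fixed {n : ℕ} (U : ℕ → Matrix (Fin n) (Fin n) ℝ) (g : Fin n → ℝ)
    (a : ℕ) : ∀ b : ℕ, (∀ i, a ≤ i → i < b → U i *ᵥ g = g) → prodAsc U a b *ᵥ g = g := by
  intro b
  induction b with
  | zero => intro _; rw [prodAsc_of_le U (Nat.zero_le a), Matrix.one_mulVec]
  | succ b ih =>
    intro hfix
    by_cases hab : a ≤ b
    · rw [prodAsc_succ_right U hab, ← Matrix.mulVec_mulVec,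
        hfix b hab (Nat.lt_succ_self b), ih (fun i h1 h2 => hfix i h1 (by omega))]
    · rw [prodAsc_of_le U (by omega), Matrix.one_mulVec]

lemma prodAsc_transpose_mulVec_fixed {n : ℕ} (U : ℕ → Matrix (Fin n) (Fin n) ℝ)
    (g : Fin n → ℝ) (a : ℕ) :
    ∀ b : ℕ, (∀ i, a ≤ i → i < b → (U i)ᵀ *ᵥ g = g) → (prodAsc U a b)ᵀ *ᵥ g = g := by
  intro b
  induction b with
  | zero => intro _; rw [prodAsc_of_le U (Nat.zero_le a)]; simp
  | succ b ih =>
    intro hfix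
    by_cases hab : a ≤ b
    · rw [prodAsc_succ_right U hab, Matrix.transpose_mul, ← Matrix.mulVec_mulVec,
        ih (fun i h1 h2 => hfix i h1 (by omega)), hfix b hab (Nat.lt_succ_self b)]
    · rw [prodAsc_of_le U (by omega)]; simp

lemma prodAsc_transpose_mulVec_last {n : ℕ} (U : ℕ → Matrix (Fin n) (Fin n) ℝ)
    (g : Fin n → ℝ) {a k : ℕ} (hak : a ≤ k)
    (hfix : ∀ i, a ≤ i → i < k → (U i)ᵀ *ᵥ g = g) :
    (prodAsc U a (k + 1))ᵀ *ᵥ g = (U k)ᵀ *ᵥ g := by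
  rw [prodAsc_succ_right U hak, Matrix.transpose_mul, ← Matrix.mulVec_mulVec,
    prodAsc_transpose_mulVec_fixed U g a k hfix]

lemma updateU_mulVec {n : ℕ} (ρ : ℝ) (y s g : Fin n → ℝ) :
    (1 - ρ • vecMulVec y s) *ᵥ g = g - (ρ * (s ⬝ᵥ g)) • y := by
  rw [Matrix.sub_mulVec, Matrix.one_mulVec, Matrix.smul_mulVec,
    vecMulVec_mulVec', smul_smul]

lemma updateU_transpose_mulVec {n : ℕ} (ρ : ℝ) (y s g : Fin n → ℝ) :
    (1 - ρ • vecMulVec y s)ᵀ *ᵥ g = g - (ρ * (y ⬝ᵥ g)) • s := by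
  have ht : (vecMulVec y s)ᵀ = vecMulVec s y := by
    ext i k; simp [vecMulVec_apply, transpose_apply, mul_comm]
  rw [Matrix.transpose_sub, Matrix.transpose_one, Matrix.transpose_smul, ht,
    Matrix.sub_mulVec, Matrix.one_mulVec, Matrix.smul_mulVec,
    vecMulVec_mulVec', smul_smul]

lemma sum_mulVec' {n : ℕ} {ι : Type*} [DecidableEq ι] (s : Finset ι) (f : ι → Matrix (Fin n) (Fin n) ℝ)
    (v : Fin n → ℝ) : (∑ i ∈ s, f i) *ᵥ v = ∑ i ∈ s, f i *ᵥ v := by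
  induction s using Finset.induction with
  | empty => simp [Matrix.zero_mulVec]
  | insert _ _ h ih => simp [Finset.sum_insert h, Matrix.add_mulVec, ih]

lemma sum_dotProduct' {n : ℕ} {ι : Type*} [DecidableEq ι] (s : Finset ι) (f : ι → Fin n → ℝ)
    (v : Fin n → ℝ) : (∑ i ∈ s, f i) ⬝ᵥ v = ∑ i ∈ s, f i ⬝ᵥ v := by
  induction s using Finset.induction with
  | empty => simp
  | insert _ _ h ih => simp [Finset.sum_insert h, add_dotProduct, ih]

lemma lbfgsH_zero {n : ℕ} (H0 : Matrix (Fin n) (Fin n) ℝ) (s y : ℕ → Fin n → ℝ) (m : ℕ) :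
    lbfgsH H0 s y m 0 = H0 := by
  simp [lbfgsH, prodAsc]

lemma lbfgsH_apply {n : ℕ} (H0 : Matrix (Fin n) (Fin n) ℝ) (s y : ℕ → Fin n → ℝ)
    (m p : ℕ) (hm : 1 ≤ m) (g : Fin n → ℝ)
    (horth : ∀ i, i ≤ p → s i ⬝ᵥ g = 0)
    (horthH : ∀ i, i < p → y i ⬝ᵥ (H0 *ᵥ g) = 0) :
    lbfgsH H0 s y m (p+1) *ᵥ g =
      H0 *ᵥ g - ((1 / (s p ⬝ᵥ y p)) * (y p ⬝ᵥ (H0 *ᵥ g))) • s p := by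
  have ha : p + 1 - m ≤ p := by omega
  set U : ℕ → Matrix (Fin n) (Fin n) ℝ :=
    fun i => 1 - (1 / (s i ⬝ᵥ y i)) • vecMulVec (y i) (s i) with hU
  have hUfix : ∀ i, i ≤ p → U i *ᵥ g = g := by
    intro i hip
    rw [show U i = 1 - (1 / (s i ⬝ᵥ y i)) • vecMulVec (y i) (s i) from rfl,
      updateU_mulVec, horth i hip, mul_zero, zero_smul, sub_zero]
  have hUtfix : ∀ i, i < p → (U i)ᵀ *ᵥ (H0 *ᵥ g) = H0 *ᵥ g := by
    intro i hip
    rw [show U i = 1 - (1 / (s i ⬝ᵥ y i)) • vecMulVec (y i) (s i) from rfl,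
      updateU_transpose_mulVec, horthH i hip, mul_zero, zero_smul, sub_zero]
  have key : lbfgsH H0 s y m (p+1) =
      (prodAsc U (p+1-m) (p+1))ᵀ * H0 * prodAsc U (p+1-m) (p+1) +
      ∑ i ∈ Finset.Ico (p+1-m) (p+1), (1 / (s i ⬝ᵥ y i)) •
        ((prodAsc U (i+1) (p+1))ᵀ * vecMulVec (s i) (s i) * prodAsc U (i+1) (p+1)) := rfl
  rw [key, Matrix.add_mulVec, sum_mulVec']
  have h1 : ((prodAsc U (p+1-m) (p+1))ᵀ * H0 * prodAsc U (p+1-m) (p+1)) *ᵥ g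
      = (U p)ᵀ *ᵥ (H0 *ᵥ g) := by
    rw [← Matrix.mulVec_mulVec, ← Matrix.mulVec_mulVec,
      prodAsc_mulVec_fixed U g _ (p+1) (fun i hi1 hi2 => hUfix i (by omega)),
      prodAsc_transpose_mulVec_last U _ ha (fun i hi1 hi2 => hUtfix i (by omega))]
  have h2 : ∀ i ∈ Finset.Ico (p+1-m) (p+1), ((1 / (s i ⬝ᵥ y i)) •
      ((prodAsc U (i+1) (p+1))ᵀ * vecMulVec (s i) (s i) * prodAsc U (i+1) (p+1))) *ᵥ g
        = 0 := by
    intro i hi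
    obtain ⟨hi1, hi2⟩ := Finset.mem_Ico.mp hi
    rw [Matrix.smul_mulVec, ← Matrix.mulVec_mulVec, ← Matrix.mulVec_mulVec,
      prodAsc_mulVec_fixed U g _ (p+1) (fun i' hi1' hi2' => hUfix i' (by omega)),
      vecMulVec_mulVec', horth i (by omega), zero_smul, Matrix.mulVec_zero, smul_zero]
  rw [Finset.sum_congr rfl h2, Finset.sum_const_zero, add_zero, h1,
    show U p = 1 - (1 / (s p ⬝ᵥ y p)) • vecMulVec (y p) (s p) from rfl,
    updateU_transpose_mulVec]


lemma dot_symm' {n : ℕ} (M : Matrix (Fin n) (Fin n) ℝ) (hM : Mᵀ = M) (x y : Fin n → ℝ) :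
    x ⬝ᵥ (M *ᵥ y) = y ⬝ᵥ (M *ᵥ x) := by
  rw [Matrix.dotProduct_mulVec, ← Matrix.mulVec_transpose, hM, dotProduct_comm]

lemma cg_inv {n : ℕ} (A H0 : Matrix (Fin n) (Fin n) ℝ) (b : Fin n → ℝ)
    (hAs : Aᵀ = A) (hHs : H0ᵀ = H0) (j : ℕ)
    (xC dC gC : ℕ → Fin n → ℝ)
    (hgC : ∀ k, gC k = A *ᵥ xC k - b)
    (hdC0 : dC 0 = -(H0 *ᵥ gC 0))
    (hdC : ∀ k, dC (k+1) = -(H0 *ᵥ gC (k+1)) +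
      ((gC (k+1) ⬝ᵥ (H0 *ᵥ gC (k+1))) / (gC k ⬝ᵥ (H0 *ᵥ gC k))) • dC k)
    (hxC : ∀ k, xC (k+1) = xC k +
      (-(gC k ⬝ᵥ dC k) / (dC k ⬝ᵥ (A *ᵥ dC k))) • dC k)
    (hwf1 : ∀ k, k ≤ j → gC k ⬝ᵥ (H0 *ᵥ gC k) ≠ 0)
    (hwf2 : ∀ k, k ≤ j → dC k ⬝ᵥ (A *ᵥ dC k) ≠ 0) :
    ∀ k, k ≤ j →
      (∀ i, i < k → gC k ⬝ᵥ (H0 *ᵥ gC i) = 0 ∧ gC k ⬝ᵥ dC i = 0 ∧ dC k ⬝ᵥ (A *ᵥ dC i) = 0)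
      ∧ gC k ⬝ᵥ dC k = -(gC k ⬝ᵥ (H0 *ᵥ gC k)) := by
  have hgrec : ∀ q, gC (q+1) = gC q +
      (-(gC q ⬝ᵥ dC q) / (dC q ⬝ᵥ (A *ᵥ dC q))) • (A *ᵥ dC q) := by
    intro q
    rw [hgC (q+1), hxC q, Matrix.mulVec_add, Matrix.mulVec_smul, hgC q]
    abel
  intro k
  induction k using Nat.strong_induction_on with
  | _ k IH =>
    intro hk
    cases k with
    | zero =>
      refine ⟨fun i hi => absurd hi (by omega), ?_⟩
      rw [hdC0, dotProduct_neg]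
    | succ p =>
      have hpj : p ≤ j := by omega
      have IHp := IH p (Nat.lt_succ_self p) hpj
      have O4 : ∀ q, q ≤ p → gC q ⬝ᵥ dC q = -(gC q ⬝ᵥ (H0 *ᵥ gC q)) :=
        fun q hq => (IH q (by omega) (by omega)).2
      have αne : ∀ q, q ≤ p → -(gC q ⬝ᵥ dC q) / (dC q ⬝ᵥ (A *ᵥ dC q)) ≠ 0 := by
        intro q hq
        have h1 := hwf1 q (by omega); have h2 := hwf2 q (by omega)
        have hnum : -(gC q ⬝ᵥ dC q) = gC q ⬝ᵥ (H0 *ᵥ gC q) := by rw [O4 q hq, neg_neg]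
        rw [hnum]; exact div_ne_zero h1 h2
      have O2' : ∀ i, i < p + 1 → gC (p+1) ⬝ᵥ dC i = 0 := by
        intro i hi
        rw [hgrec p, add_dotProduct, smul_dotProduct]
        rcases Nat.lt_succ_iff_lt_or_eq.mp hi with h | heq
        · have h1 := (IHp.1 i h).2.1
          have h2 := (IHp.1 i h).2.2
          have h3 : (A *ᵥ dC p) ⬝ᵥ dC i = 0 := by
            rw [dotProduct_comm, dot_symm' A hAs]; exact h2
          rw [h1, h3]; simp
        · subst heq
          have h3 : (A *ᵥ dC i) ⬝ᵥ dC i = dC i ⬝ᵥ (A *ᵥ dC i) := dotProduct_comm _ _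
          rw [h3, smul_eq_mul, div_mul_cancel₀ _ (hwf2 i hpj)]
          ring
      have O1' : ∀ i, i < p + 1 → gC (p+1) ⬝ᵥ (H0 *ᵥ gC i) = 0 := by
        intro i hi
        cases i with
        | zero =>
          have h0 : H0 *ᵥ gC 0 = -(dC 0) := by rw [hdC0, neg_neg]
          rw [h0, dotProduct_neg, O2' 0 hi, neg_zero]
        | succ q =>
          have h0 : H0 *ᵥ gC (q+1) =
              ((gC (q+1) ⬝ᵥ (H0 *ᵥ gC (q+1))) / (gC q ⬝ᵥ (H0 *ᵥ gC q))) • dC q - dC (q+1) := by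
            rw [hdC q]; abel
          rw [h0, dotProduct_sub, dotProduct_smul, O2' q (by omega), O2' (q+1) hi]
          simp
      have O4' : gC (p+1) ⬝ᵥ dC (p+1) = -(gC (p+1) ⬝ᵥ (H0 *ᵥ gC (p+1))) := by
        rw [hdC p, dotProduct_add, dotProduct_smul, O2' p (Nat.lt_succ_self p), dotProduct_neg]
        simp
      have O3' : ∀ i, i < p + 1 → dC (p+1) ⬝ᵥ (A *ᵥ dC i) = 0 := by
        intro i hi
        have hip : i ≤ p := by omega
        have hAd : A *ᵥ dC i =
            (-(gC i ⬝ᵥ dC i) / (dC i ⬝ᵥ (A *ᵥ dC i)))⁻¹ • (gC (i+1) - gC i) := by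
          rw [hgrec i, add_sub_cancel_left, smul_smul, inv_mul_cancel₀ (αne i hip), one_smul]
        rw [hdC p, add_dotProduct, neg_dotProduct, smul_dotProduct]
        rcases Nat.lt_succ_iff_lt_or_eq.mp hi with h | heq
        · have a1 : (H0 *ᵥ gC (p+1)) ⬝ᵥ gC (i+1) = 0 := by
            rw [dotProduct_comm, dot_symm' H0 hHs]; exact (O1' (i+1) (by omega))
          have a2 : (H0 *ᵥ gC (p+1)) ⬝ᵥ gC i = 0 := by
            rw [dotProduct_comm, dot_symm' H0 hHs]; exact (O1' i (by omega))
          have e1 : (H0 *ᵥ gC (p+1)) ⬝ᵥ (A *ᵥ dC i) = 0 := by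
            rw [hAd, dotProduct_smul, dotProduct_sub, a1, a2]
            simp
          have t2 := (IHp.1 i h).2.2
          rw [e1, t2]; simp
        · subst heq
          have a1 : (H0 *ᵥ gC (i+1)) ⬝ᵥ gC (i+1) = gC (i+1) ⬝ᵥ (H0 *ᵥ gC (i+1)) :=
            dotProduct_comm _ _
          have a2 : (H0 *ᵥ gC (i+1)) ⬝ᵥ gC i = 0 := by
            rw [dotProduct_comm, dot_symm' H0 hHs]; exact (O1' i (by omega))
          have e1 : (H0 *ᵥ gC (i+1)) ⬝ᵥ (A *ᵥ dC i) =
              (-(gC i ⬝ᵥ dC i) / (dC i ⬝ᵥ (A *ᵥ dC i)))⁻¹ *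
                (gC (i+1) ⬝ᵥ (H0 *ᵥ gC (i+1))) := by
            conv_lhs => rw [hAd]
            rw [dotProduct_smul, dotProduct_sub, a1, a2, sub_zero, smul_eq_mul]
          rw [e1, O4 i le_rfl, neg_neg]
          have hG := hwf1 i hpj
          have hD := hwf2 i hpj
          field_simp
          ring_nf; rw [mul_inv_cancel_right₀ hG]; ring
      exact ⟨fun i hi => ⟨O1' i hi, O2' i hi, O3' i hi⟩, O4'⟩

/-- LBFGS(m) with exact line search and seed `H_k⁰ = H₀` generates,
for any memory `m ≥ 1`, the same search directions, step lengths and steps as PCG with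
preconditioner `H₀`, and enjoys quadratic termination when `j = n`. -/
theorem lbfgs_eq_pcg
    (n : ℕ) (A H0 : Matrix (Fin n) (Fin n) ℝ) (b x0 : Fin n → ℝ)
    (hA : A.IsSymm) (hH0 : H0.PosDef)
    (m : ℕ) (hm : 1 ≤ m) (j : ℕ)
    -- PCG sequences with preconditioner H0
    (xC dC gC : ℕ → Fin n → ℝ)
    (hgC : ∀ k, gC k = A *ᵥ xC k - b)
    (hxC0 : xC 0 = x0)
    (hdC0 : dC 0 = -(H0 *ᵥ gC 0))
    (hdC : ∀ k, dC (k+1) = -(H0 *ᵥ gC (k+1)) +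
      ((gC (k+1) ⬝ᵥ (H0 *ᵥ gC (k+1))) / (gC k ⬝ᵥ (H0 *ᵥ gC k))) • dC k)
    (hxC : ∀ k, xC (k+1) = xC k +
      (-(gC k ⬝ᵥ dC k) / (dC k ⬝ᵥ (A *ᵥ dC k))) • dC k)
    -- LBFGS(m) sequences with exact line search
    (xB dB sB yB gB : ℕ → Fin n → ℝ)
    (hgB : ∀ k, gB k = A *ᵥ xB k - b)
    (hxB0 : xB 0 = x0)
    (hdB : ∀ k, dB k = -(lbfgsH H0 sB yB m k *ᵥ gB k))
    (hxB : ∀ k, xB (k+1) = xB k +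
      (-(gB k ⬝ᵥ dB k) / (dB k ⬝ᵥ (A *ᵥ dB k))) • dB k)
    (hsB : ∀ k, sB k = xB (k+1) - xB k)
    (hyB : ∀ k, yB k = A *ᵥ sB k)
    -- iterations 0,…,j of both methods are well defined
    (hwf1 : ∀ k, k ≤ j → gC k ⬝ᵥ (H0 *ᵥ gC k) ≠ 0)
    (hwf2 : ∀ k, k ≤ j → dC k ⬝ᵥ (A *ᵥ dC k) ≠ 0)
    (hwf3 : ∀ k, k ≤ j → dB k ⬝ᵥ (A *ᵥ dB k) ≠ 0)
    -- nonzero curvature along the steps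
    (hsy : ∀ k, k ≤ j → sB k ⬝ᵥ yB k ≠ 0) :
    -- directions, step lengths and steps coincide with those of PCG
    (∀ k, k ≤ j → (∀ i, i ≤ k → gB i ≠ 0) →
      dB k = dC k ∧
      xB k = xC k ∧
      -(gB k ⬝ᵥ dB k) / (dB k ⬝ᵥ (A *ᵥ dB k)) =
        -(gC k ⬝ᵥ dC k) / (dC k ⬝ᵥ (A *ᵥ dC k)) ∧
      sB k = xC (k+1) - xC k) ∧
    -- quadratic termination
    (j = n → ∃ k, k ≤ n ∧ A *ᵥ xB k = b) := by
  
    have hAs : Aᵀ = A := hA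
    have hHs : H0ᵀ = H0 := by
      have h := hH0.isHermitian; rw [Matrix.IsHermitian] at h; simpa using h
    have inv := cg_inv A H0 b hAs hHs j xC dC gC hgC hdC0 hdC hxC hwf1 hwf2
    have hgrec : ∀ q, gC (q+1) = gC q +
        (-(gC q ⬝ᵥ dC q) / (dC q ⬝ᵥ (A *ᵥ dC q))) • (A *ᵥ dC q) := by
      intro q
      rw [hgC (q+1), hxC q, Matrix.mulVec_add, Matrix.mulVec_smul, hgC q]
      abel
    -- LBFGS coincides with PCG
    have equiv : ∀ k, k ≤ j → xB k = xC k ∧ dB k = dC k := by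
      intro k
      induction k using Nat.strong_induction_on with
      | _ k IH =>
        intro hk
        cases k with
        | zero =>
          refine ⟨by rw [hxB0, hxC0], ?_⟩
          rw [hdB 0, lbfgsH_zero, hgB 0, hxB0, ← hxC0, ← hgC 0, hdC0]
        | succ p =>
          have hpj : p ≤ j := by omega
          obtain ⟨hxp, hdp⟩ := IH p (Nat.lt_succ_self p) hpj
          have hgp : gB p = gC p := by rw [hgB, hgC, hxp]
          have hxp1 : xB (p+1) = xC (p+1) := by
            rw [hxB p, hxC p, hxp, hdp, hgp]
          refine ⟨hxp1, ?_⟩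
          have hgp1 : gB (p+1) = gC (p+1) := by rw [hgB, hgC, hxp1]
          have hs' : ∀ q, q ≤ p → sB q =
              (-(gC q ⬝ᵥ dC q) / (dC q ⬝ᵥ (A *ᵥ dC q))) • dC q := by
            intro q hq
            obtain ⟨hxq, hdq⟩ := IH q (by omega) (by omega)
            have hgq : gB q = gC q := by rw [hgB, hgC, hxq]
            rw [hsB q, hxB q, hdq, hgq]
            exact add_sub_cancel_left _ _
          have hy' : ∀ q, q ≤ p → yB q = gC (q+1) - gC q := by
            intro q hq
            rw [hyB q, hs' q hq, Matrix.mulVec_smul, hgrec q]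
            abel
          have hwin : ∀ i, i ≤ p → sB i ⬝ᵥ gC (p+1) = 0 := by
            intro i hip
            rw [hs' i hip, smul_dotProduct, dotProduct_comm (dC i) (gC (p+1)),
              ((inv (p+1) hk).1 i (by omega)).2.1, smul_zero]
          have horthH : ∀ i, i < p → yB i ⬝ᵥ (H0 *ᵥ gC (p+1)) = 0 := by
            intro i hip
            rw [hy' i (le_of_lt hip), sub_dotProduct]
            have e1 : gC (i+1) ⬝ᵥ (H0 *ᵥ gC (p+1)) = 0 := by
              rw [dot_symm' H0 hHs]; exact ((inv (p+1) hk).1 (i+1) (by omega)).1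
            have e2 : gC i ⬝ᵥ (H0 *ᵥ gC (p+1)) = 0 := by
              rw [dot_symm' H0 hHs]; exact ((inv (p+1) hk).1 i (by omega)).1
            rw [e1, e2, sub_zero]
          have hyH : yB p ⬝ᵥ (H0 *ᵥ gC (p+1)) = gC (p+1) ⬝ᵥ (H0 *ᵥ gC (p+1)) := by
            rw [hy' p le_rfl, sub_dotProduct]
            have e2 : gC p ⬝ᵥ (H0 *ᵥ gC (p+1)) = 0 := by
              rw [dot_symm' H0 hHs]; exact ((inv (p+1) hk).1 p (by omega)).1
            rw [e2, sub_zero]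
          have hsyp : sB p ⬝ᵥ yB p =
              (-(gC p ⬝ᵥ dC p) / (dC p ⬝ᵥ (A *ᵥ dC p))) * (gC p ⬝ᵥ (H0 *ᵥ gC p)) := by
            rw [hs' p le_rfl, hy' p le_rfl, smul_dotProduct, dotProduct_sub]
            have e1 : dC p ⬝ᵥ gC (p+1) = 0 := by
              rw [dotProduct_comm]; exact ((inv (p+1) hk).1 p (by omega)).2.1
            have e2 : dC p ⬝ᵥ gC p = -(gC p ⬝ᵥ (H0 *ᵥ gC p)) := by
              rw [dotProduct_comm]; exact (inv p hpj).2
            rw [e1, e2]; simp only [smul_eq_mul]; ring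
          have hG : gC p ⬝ᵥ (H0 *ᵥ gC p) ≠ 0 := hwf1 p hpj
          have hcne : (-(gC p ⬝ᵥ dC p) / (dC p ⬝ᵥ (A *ᵥ dC p))) ≠ 0 := by
            have hnum : -(gC p ⬝ᵥ dC p) = gC p ⬝ᵥ (H0 *ᵥ gC p) := by
              rw [(inv p hpj).2, neg_neg]
            rw [hnum]; exact div_ne_zero hG (hwf2 p hpj)
          rw [hdB (p+1), hgp1,
            lbfgsH_apply H0 sB yB m p hm (gC (p+1)) hwin horthH,
            hyH, hsyp, hs' p le_rfl, smul_smul, hdC p]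
          have hgd : gC p ⬝ᵥ dC p ≠ 0 := by
            intro h; apply hcne; rw [h]; simp
          have hD : dC p ⬝ᵥ (A *ᵥ dC p) ≠ 0 := hwf2 p hpj
          rw [show 1 / (-(gC p ⬝ᵥ dC p) / (dC p ⬝ᵥ (A *ᵥ dC p)) * (gC p ⬝ᵥ (H0 *ᵥ gC p))) *
              (gC (p+1) ⬝ᵥ (H0 *ᵥ gC (p+1))) * (-(gC p ⬝ᵥ dC p) / (dC p ⬝ᵥ (A *ᵥ dC p))) =
              (gC (p+1) ⬝ᵥ (H0 *ᵥ gC (p+1))) / (gC p ⬝ᵥ (H0 *ᵥ gC p)) from by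
            field_simp]
          rw [neg_sub, sub_eq_neg_add]
    refine ⟨?_, ?_⟩
    · intro k hkj _
      obtain ⟨hx, hd⟩ := equiv k hkj
      have hg : gB k = gC k := by rw [hgB, hgC, hx]
      refine ⟨hd, hx, by rw [hg, hd], ?_⟩
      rw [hsB k, hxB k, hxC k, hx, hd, hg]
    · intro hjn
      exfalso
      have hne : ∀ i : Fin (n+1), gC (i : ℕ) ⬝ᵥ (H0 *ᵥ gC (i : ℕ)) ≠ 0 := by
        intro i
        exact hwf1 i (by omega)
      have hli : LinearIndependent ℝ (fun i : Fin (n+1) => gC (i : ℕ)) := by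
        rw [Fintype.linearIndependent_iff]
        intro c hc i0
        have hdot : (∑ i, c i • gC (i : ℕ)) ⬝ᵥ (H0 *ᵥ gC (i0 : ℕ)) = 0 := by
          rw [hc, zero_dotProduct]
        rw [sum_dotProduct'] at hdot
        have hterm : ∀ i : Fin (n+1), i ≠ i0 →
            (c i • gC (i : ℕ)) ⬝ᵥ (H0 *ᵥ gC (i0 : ℕ)) = 0 := by
          intro i hii
          rw [smul_dotProduct]
          rcases lt_or_gt_of_ne (fun h => hii (Fin.ext h) : (i : ℕ) ≠ (i0 : ℕ)) with h | h
          · rw [dot_symm' H0 hHs, ((inv i0 (by omega)).1 i h).1, smul_zero]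
          · rw [((inv i (by omega)).1 i0 h).1, smul_zero]
        rw [Fintype.sum_eq_single i0 hterm, smul_dotProduct, smul_eq_mul] at hdot
        rcases mul_eq_zero.mp hdot with h | h
        · exact h
        · exact absurd h (hne i0)
      have hcard := hli.fintype_card_le_finrank
      simp [Module.finrank_fin_fun] at hcard
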